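/- Suppose ρ_i and β_i are continuous on [0, b̄_i] and β_i(b)ρ_i(b) > 0 for all b ∈ (0, b̄_i], for every i ∈ I light fix λ ∈ ℝ^K and fix i ∈ I such that λ_k ≥ 1 for all k ∈ K_i. Then ψ_i(λ) = 0, and S_i*(λ) = { (x_i, b_i) ∈ S_i : x_{ik} b_{ik} = 0 for every k ∈ K_i with λ_k = 1, and x_{ik} ρ_i(b_{ik}) = 0 for every k ∈ K_i with λ_k > 1 }. -/
import Mathlib


open scoped BigOperators Classical

theorem stmt_17
    {I K : Type*} [Fintype I] [Fintype K] [DecidableEq I] [DecidableEq K]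
    (E : Finset (I × K))
    (bbar : I → ℝ) (hbbar : ∀ i, 0 < bbar i)
    (ρ β : I → ℝ → ℝ)
    (hρmono : ∀ i, MonotoneOn (ρ i) (Set.Icc 0 (bbar i)))
    (hβmono : ∀ i, MonotoneOn (β i) (Set.Icc 0 (bbar i)))
    (hρ01 : ∀ i, ∀ b ∈ Set.Icc (0:ℝ) (bbar i), ρ i b ∈ Set.Icc (0:ℝ) 1)
    (hβb : ∀ i, ∀ b ∈ Set.Icc (0:ℝ) (bbar i), β i b ∈ Set.Icc (0:ℝ) b)
    (s : I → ℝ) (hs : ∀ i, 0 < s i)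
    (r : I → K → ℝ) (hr : ∀ i k, (i, k) ∈ E → 0 < r i k)
    (h : I → ℝ → ℝ → ℝ)
    (hdef : ∀ i z b, h i z b = (z - β i b) * ρ i b)
    (hρcont : ∀ i, ContinuousOn (ρ i) (Set.Icc 0 (bbar i)))
    (hβcont : ∀ i, ContinuousOn (β i) (Set.Icc 0 (bbar i)))
    (hβρpos : ∀ i, ∀ b ∈ Set.Ioc (0:ℝ) (bbar i), 0 < β i b * ρ i b)
    (Si : I → Set ((K → ℝ) × (K → ℝ)))
    (hSi : ∀ i, Si i = {xb | (∀ k, (i, k) ∈ E → 0 ≤ xb.1 k) ∧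
      (∑ k ∈ Finset.univ.filter (fun k => (i, k) ∈ E), xb.1 k) ≤ 1 ∧
      (∀ k, (i, k) ∈ E → xb.2 k ∈ Set.Icc (0:ℝ) (bbar i))})
    (obji : I → (K → ℝ) → (K → ℝ) → (K → ℝ) → ℝ)
    (hobji : ∀ i lam x b, obji i lam x b =
      ∑ k ∈ Finset.univ.filter (fun k => (i, k) ∈ E), h i (r i k * (1 - lam k)) (b k) * s i * x k)
    (Sistar : I → (K → ℝ) → Set ((K → ℝ) × (K → ℝ)))
    (hSistar : ∀ i lam, Sistar i lam =
      {xb | xb ∈ Si i ∧ ∀ yb ∈ Si i, obji i lam yb.1 yb.2 ≤ obji i lam xb.1 xb.2})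
    (vi : I → (K → ℝ) → (K → ℝ) → K → ℝ)
    (hvi : ∀ i x b k, vi i x b k = if (i, k) ∈ E then r i k * s i * x k * ρ i (b k) else 0)
    (psi : I → (K → ℝ) → EReal)
    (hpsi : ∀ i lam, psi i lam = ⨆ xb ∈ Si i, ((obji i lam xb.1 xb.2 : ℝ) : EReal))
    (lam : K → ℝ) (i : I)
    (hge1 : ∀ k, (i, k) ∈ E → 1 ≤ lam k) :
    psi i lam = 0 ∧
      Sistar i lam = {xb | xb ∈ Si i ∧ ∀ k, (i, k) ∈ E →
        (lam k = 1 → xb.1 k * xb.2 k = 0) ∧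
        (1 < lam k → xb.1 k * ρ i (xb.2 k) = 0)} := by

  have hβ0 : β i 0 = 0 := by
    have h00 := hβb i 0 ⟨le_refl 0, (hbbar i).le⟩
    exact le_antisymm h00.2 h00.1
  have hzero : ((fun _ => (0:ℝ)), (fun _ => (0:ℝ))) ∈ Si i := by
    rw [hSi]
    refine ⟨fun k _ => le_refl 0, by simp, fun k _ => ?_⟩
    exact ⟨le_refl 0, (hbbar i).le⟩
  have hobj0 : obji i lam (fun _ => (0:ℝ)) (fun _ => (0:ℝ)) = 0 := by
    rw [hobji]; simp
  have key : ∀ xb ∈ Si i, ∀ k, (i, k) ∈ E →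
      (h i (r i k * (1 - lam k)) (xb.2 k) * s i * xb.1 k ≤ 0 ∧
       (h i (r i k * (1 - lam k)) (xb.2 k) * s i * xb.1 k = 0 ↔
         ((lam k = 1 → xb.1 k * xb.2 k = 0) ∧ (1 < lam k → xb.1 k * ρ i (xb.2 k) = 0)))) := by
    intro xb hxb k hk
    rw [hSi] at hxb
    obtain ⟨hx, _, hb⟩ := hxb
    have hx0 : 0 ≤ xb.1 k := hx k hk
    have hbmem : xb.2 k ∈ Set.Icc (0:ℝ) (bbar i) := hb k hk
    have hρm := hρ01 i _ hbmem
    have hβm := hβb i _ hbmem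
    have hrk := hr i k hk
    have hc : r i k * (1 - lam k) - β i (xb.2 k) ≤ 0 := by
      have h1 : r i k * (1 - lam k) ≤ 0 :=
        mul_nonpos_of_nonneg_of_nonpos hrk.le (by linarith [hge1 k hk])
      linarith [hβm.1, hbmem.1]
    rw [hdef]
    constructor
    · exact mul_nonpos_of_nonpos_of_nonneg
        (mul_nonpos_of_nonpos_of_nonneg
          (mul_nonpos_of_nonpos_of_nonneg hc hρm.1) (hs i).le) hx0
    · rcases eq_or_lt_of_le (hge1 k hk) with h1 | h1
      · -- lam k = 1
        have he : lam k = 1 := h1.symm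
        constructor
        · intro h0
          refine ⟨fun _ => ?_, fun hlt => absurd he hlt.ne'⟩
          have hz : β i (xb.2 k) * ρ i (xb.2 k) * xb.1 k * s i = 0 := by
            linear_combination (-1 : ℝ) * h0 -
              r i k * ρ i (xb.2 k) * s i * xb.1 k * he
          have hz2 : β i (xb.2 k) * ρ i (xb.2 k) * xb.1 k = 0 := by
            rcases mul_eq_zero.mp hz with hz2 | hz2
            · exact hz2
            · exact absurd hz2 (hs i).ne'
          by_cases hb0 : xb.2 k = 0
          · simp [hb0]
          · have hbpos : 0 < xb.2 k := lt_of_le_of_ne hbmem.1 (Ne.symm hb0)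
            have hβρ := hβρpos i (xb.2 k) ⟨hbpos, hbmem.2⟩
            rcases mul_eq_zero.mp hz2 with hz3 | hz3
            · exact absurd hz3 hβρ.ne'
            · simp [hz3]
        · rintro ⟨hcond, -⟩
          rcases mul_eq_zero.mp (hcond he) with hx0e | hb0e
          · simp [hx0e]
          · rw [hb0e, he, hβ0]; ring
      · -- 1 < lam k
        have hcneg : r i k * (1 - lam k) - β i (xb.2 k) < 0 := by
          have h2 : r i k * (1 - lam k) < 0 := mul_neg_of_pos_of_neg hrk (by linarith)
          linarith [hβm.1, hbmem.1]
        constructor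
        · intro h0
          refine ⟨fun heq => absurd heq h1.ne', fun _ => ?_⟩
          have hz : ((r i k * (1 - lam k) - β i (xb.2 k)) * s i) *
              (xb.1 k * ρ i (xb.2 k)) = 0 := by linear_combination h0
          rcases mul_eq_zero.mp hz with hz2 | hz2
          · exact absurd hz2 (mul_ne_zero hcneg.ne (hs i).ne')
          · exact hz2
        · rintro ⟨-, hcond⟩
          have hz := hcond h1
          linear_combination (r i k * (1 - lam k) - β i (xb.2 k)) * s i * hz
  have hle : ∀ xb ∈ Si i, obji i lam xb.1 xb.2 ≤ 0 := by
    intro xb hxb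
    rw [hobji]
    exact Finset.sum_nonpos fun k hk =>
      (key xb hxb k (Finset.mem_filter.mp hk).2).1
  have hpsi0 : psi i lam = 0 := by
    rw [hpsi]
    apply le_antisymm
    · refine iSup₂_le fun xb hxb => ?_
      have := hle xb hxb
      exact_mod_cast EReal.coe_le_coe_iff.mpr this
    · have h0 : ((obji i lam (fun _ => (0:ℝ)) (fun _ => (0:ℝ)) : ℝ) : EReal) = 0 := by
        rw [hobj0]; rfl
      exact le_iSup₂_of_le ((fun _ => (0:ℝ)), (fun _ => (0:ℝ))) hzero (le_of_eq h0.symm)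
  refine ⟨hpsi0, ?_⟩
  rw [hSistar]
  ext xb
  simp only [Set.mem_setOf_eq]
  constructor
  · rintro ⟨hxb, hmax⟩
    refine ⟨hxb, fun k hk => ?_⟩
    have h0le : 0 ≤ obji i lam xb.1 xb.2 := by
      have := hmax _ hzero
      rwa [hobj0] at this
    have hobjz : obji i lam xb.1 xb.2 = 0 := le_antisymm (hle xb hxb) h0le
    rw [hobji] at hobjz
    have hall := (Finset.sum_eq_zero_iff_of_nonpos
      (fun k hk => (key xb hxb k (Finset.mem_filter.mp hk).2).1)).mp hobjz
    exact (key xb hxb k hk).2.mp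
      (hall k (Finset.mem_filter.mpr ⟨Finset.mem_univ k, hk⟩))
  · rintro ⟨hxb, hcond⟩
    refine ⟨hxb, fun yb hyb => ?_⟩
    have hobjz : obji i lam xb.1 xb.2 = 0 := by
      rw [hobji]
      exact Finset.sum_eq_zero fun k hk =>
        (key xb hxb k (Finset.mem_filter.mp hk).2).2.mpr
          (hcond k (Finset.mem_filter.mp hk).2)
    rw [hobjz]
    exact hle yb hyb
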